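/- Let $k \ge 1$ and let $F$ be a finite forest (a simple graph with no cycles) on $n$ vertices. Then there exists a set $S$ of vertices of $F$ with $|S| \ge n \cdot (1 - 1/(k+1))$ such that every connected component of the induced subgraph $F[S]$ has at most $k$ vertices. Equivalently, $N(F, \mathcal{C}_k) \ge n(1 - (k+1)^{-1})$. -/

import Mathlib

open SimpleGraph

/-- Every connected component of `G` has at most `k` vertices. -/
def componentsAtMost {V : Type*} (G : SimpleGraph V) (k : ℕ) : Prop :=
  ∀ v : V, ((G.connectedComponentMk v).supp).ncard ≤ k

namespace ForestDismantleAux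

variable {V : Type*} {F : SimpleGraph V}

/-- The walk `p` stays inside `S`. -/
def wIn (F : SimpleGraph V) (S : Set V) {a b : V} (p : F.Walk a b) : Prop :=
  ∀ x ∈ p.support, x ∈ S

/-- Vertices reachable from `a` by walks staying in `S`. -/
def compIn (F : SimpleGraph V) (S : Set V) (a : V) : Set V :=
  {b | ∃ p : F.Walk a b, wIn F S p}

/-- The "subtree" of `z` as seen from root `r`, within vertex set `W`:
vertices `w` admitting a path from `r` inside `W` passing through `z`. -/
def subt (F : SimpleGraph V) (W : Set V) (r z : V) : Set V :=
  {w | ∃ p : F.Walk r w, p.IsPath ∧ wIn F W p ∧ z ∈ p.support}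

lemma mem_subt_W {W : Set V} {r z w : V} (h : w ∈ subt F W r z) : w ∈ W := by
  obtain ⟨p, _, hpW, _⟩ := h
  exact hpW w p.end_mem_support

lemma concat_isPath {u v w : V} {p : F.Walk u v} (hp : p.IsPath) (h : F.Adj v w)
    (hw : w ∉ p.support) : (p.concat h).IsPath := by
  have h1 : (Walk.cons h.symm p.reverse).IsPath :=
    (hp.reverse).cons (by simpa using hw)
  have h2 := h1.reverse
  rw [Walk.reverse_cons, Walk.reverse_reverse] at h2
  rw [Walk.concat_eq_append]
  exact h2

lemma walk_closed {S P : Set V} (hP : ∀ a b, a ∈ P → F.Adj a b → b ∈ S → b ∈ P) :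
    ∀ {v w : V} (p : F.Walk v w), wIn F S p → v ∈ P → ∀ x ∈ p.support, x ∈ P := by
  intro v w p
  induction p with
  | nil =>
    intro _ hv x hx
    simp only [Walk.support_nil, List.mem_singleton] at hx
    exact hx ▸ hv
  | @cons v y w h q ih =>
    intro hp hv x hx
    have hyS : y ∈ S := hp y (by simp [Walk.support_cons, q.start_mem_support])
    have hyP : y ∈ P := hP v y hv h hyS
    have hqS : wIn F S q := fun z hz => hp z (by simp [Walk.support_cons, hz])
    simp only [Walk.support_cons, List.mem_cons] at hx
    rcases hx with rfl | hx
    · exact hv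
    · exact ih hqS hyP x hx

/-- Closure of a subtree: a vertex strictly inside the subtree of `z` has all its
`W`-neighbours inside the subtree of `z`. -/
lemma subt_closed [DecidableEq V] (hF : F.IsAcyclic) {W : Set V} {r z a b : V}
    (ha : a ∈ subt F W r z) (haz : a ≠ z) (hab : F.Adj a b) (hb : b ∈ W) :
    b ∈ subt F W r z := by
  obtain ⟨p, hp, hpW, hz⟩ := ha
  by_cases hbp : b ∈ p.support
  · have hd : (p.dropUntil b hbp).IsPath := hp.dropUntil hbp
    have hsing : p.dropUntil b hbp = (Path.singleton hab.symm : F.Walk b a) :=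
      congrArg Subtype.val (hF.path_unique ⟨p.dropUntil b hbp, hd⟩ (Path.singleton hab.symm))
    have hsupp : p.support = (p.takeUntil b hbp).support ++ (p.dropUntil b hbp).support.tail := by
      rw [← Walk.support_append, p.take_spec hbp]
    have htail : (p.dropUntil b hbp).support.tail = [a] := by
      rw [hsing]; simp [Path.singleton]
    have hz' : z ∈ (p.takeUntil b hbp).support := by
      rw [hsupp, htail, List.mem_append, List.mem_singleton] at hz
      rcases hz with hz | rfl
      · exact hz
      · exact absurd rfl haz
    exact ⟨p.takeUntil b hbp, hp.takeUntil hbp,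
      fun x hx => hpW x (p.support_takeUntil_subset hbp hx), hz'⟩
  · refine ⟨p.concat hab, concat_isPath hp hab hbp, ?_, ?_⟩
    · intro x hx
      rw [Walk.support_concat, List.mem_append,
        List.mem_singleton] at hx
      rcases hx with hx | rfl
      · exact hpW x hx
      · exact hb
    · rw [Walk.support_concat, List.mem_append]
      exact Or.inl hz

/-- Closure at the top vertex `c` of a subtree: all `W`-neighbours of `c` other than its
parent `u` lie in the subtree of `c`. -/
lemma subt_child_closed [DecidableEq V] (hF : F.IsAcyclic) {W : Set V} {r u c b : V}
    (t : F.Walk r u) (ht : t.IsPath) (htW : wIn F W t) (e : F.Adj u c)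
    (hct : c ∉ t.support) (hcW : c ∈ W) (hb : F.Adj c b) (hbW : b ∈ W) (hbu : b ≠ u) :
    b ∈ subt F W r c := by
  have hq : (t.concat e).IsPath := concat_isPath ht e hct
  by_cases hbq : b ∈ (t.concat e).support
  · exfalso
    have hbt : b ∈ t.support := by
      rw [Walk.support_concat, List.mem_append,
        List.mem_singleton] at hbq
      rcases hbq with h | rfl
      · exact h
      · exact absurd rfl hb.ne'
    have hd : (t.dropUntil b hbt).IsPath := ht.dropUntil hbt
    have hdc : c ∉ (t.dropUntil b hbt).support :=
      fun hx => hct (t.support_dropUntil_subset hbt hx)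
    have hP1 : ((t.dropUntil b hbt).concat e).IsPath := concat_isPath hd e hdc
    have heq : (t.dropUntil b hbt).concat e = (Path.singleton hb.symm : F.Walk b c) :=
      congrArg Subtype.val (hF.path_unique ⟨_, hP1⟩ (Path.singleton hb.symm))
    have hlen := congrArg Walk.length heq
    rw [Walk.length_concat] at hlen
    simp only [Path.singleton, Walk.length_cons, Walk.length_nil] at hlen
    have : (t.dropUntil b hbt).length = 0 := by omega
    exact hbu (Walk.eq_of_length_eq_zero this)
  · refine ⟨(t.concat e).concat hb, concat_isPath hq hb hbq, ?_, ?_⟩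
    · intro x hx
      rw [Walk.support_concat, List.mem_append,
        List.mem_singleton] at hx
      rcases hx with hx | rfl
      · rw [Walk.support_concat, List.mem_append,
          List.mem_singleton] at hx
        rcases hx with hx | rfl
        · exact htW x hx
        · exact hcW
      · exact hbW
    · rw [Walk.support_concat, List.mem_append]
      exact Or.inl (t.concat e).end_mem_support

/-- Every non-top vertex of the subtree of `u` lies in the subtree of a child `c` of `u`. -/
lemma exists_child [DecidableEq V] {W : Set V} {r u v : V}
    (hv : v ∈ subt F W r u) (hvu : v ≠ u) :
    ∃ (c : V) (t : F.Walk r u), t.IsPath ∧ wIn F W t ∧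
      ∃ _ : F.Adj u c, c ∉ t.support ∧ c ∈ W ∧ v ∈ subt F W r c := by
  obtain ⟨p, hp, hpW, hu⟩ := hv
  obtain ⟨c, e, d', hcons⟩ := Walk.exists_eq_cons_of_ne (Ne.symm hvu) (p.dropUntil u hu)
  have hcd : c ∈ (p.dropUntil u hu).support.tail := by
    rw [hcons, Walk.support_cons, List.tail_cons]
    exact d'.start_mem_support
  have hcp : c ∈ p.support := by
    apply p.support_dropUntil_subset hu
    rw [hcons, Walk.support_cons]
    exact List.mem_cons_of_mem _ d'.start_mem_support
  have hsupp : p.support = (p.takeUntil u hu).support ++ (p.dropUntil u hu).support.tail := by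
    rw [← Walk.support_append, p.take_spec hu]
  have hct : c ∉ (p.takeUntil u hu).support := by
    have hnd := hp.support_nodup
    rw [hsupp] at hnd
    exact fun hc => (List.disjoint_of_nodup_append hnd) hc hcd
  exact ⟨c, p.takeUntil u hu, hp.takeUntil hu,
    fun x hx => hpW x (p.support_takeUntil_subset hu hx), e, hct, hpW c hcp,
    ⟨p, hp, hpW, hcp⟩⟩

lemma compIn_subset_subt_self [DecidableEq V] {W : Set V} {r : V} :
    compIn F W r ⊆ subt F W r r := by
  rintro b ⟨p, hpW⟩
  exact ⟨p.bypass, p.bypass_isPath, fun x hx => hpW x (p.support_bypass_subset hx),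
    p.bypass.start_mem_support⟩

/-- Main induction: inside any finite vertex set `W` of a forest, we can find `S ⊆ W` with all
`S`-components of size at most `k` and `k·|W| ≤ (k+1)·|S|`. -/
lemma main_aux [Fintype V] [DecidableEq V] (hF : F.IsAcyclic) (k : ℕ) :
    ∀ (N : ℕ) (W : Finset V), W.card ≤ N →
      ∃ S : Set V, S ⊆ ↑W ∧ (∀ v ∈ S, (compIn F S v).ncard ≤ k) ∧
        k * W.card ≤ (k + 1) * S.ncard := by
  classical
  intro N
  induction N with
  | zero =>
    intro W hW
    refine ⟨∅, by simp, by simp, ?_⟩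
    have : W.card = 0 := Nat.le_zero.mp hW
    simp [this]
  | succ N ih =>
    intro W hW
    by_cases hbig : ∀ v ∈ (W : Set V), (compIn F (↑W) v).ncard ≤ k
    · refine ⟨↑W, subset_rfl, hbig, ?_⟩
      rw [Set.ncard_coe_finset]
      exact Nat.mul_le_mul_right _ (Nat.le_succ k)
    · push_neg at hbig
      obtain ⟨r, hrW, hrbig⟩ := hbig
      set Dset : Set ℕ := {l | ∃ (z : V) (p : F.Walk r z), p.IsPath ∧ wIn F ↑W p ∧
        k + 1 ≤ (subt F ↑W r z).ncard ∧ p.length = l} with hD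
      have hne : Dset.Nonempty := by
        refine ⟨0, r, Walk.nil, Walk.IsPath.nil, ?_, ?_, rfl⟩
        · intro x hx
          simp only [Walk.support_nil, List.mem_singleton] at hx
          exact hx ▸ hrW
        · calc k + 1 ≤ (compIn F ↑W r).ncard := hrbig
            _ ≤ (subt F ↑W r r).ncard :=
              Set.ncard_le_ncard compIn_subset_subt_self (Set.toFinite _)
      have hbdd : BddAbove Dset := by
        refine ⟨Fintype.card V, ?_⟩
        rintro l ⟨z, p, hp, -, -, rfl⟩
        exact hp.length_lt.le
      obtain ⟨u, p₀, hp₀, hp₀W, hsubu, hp₀len⟩ := Nat.sSup_mem hne hbdd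
      have hmax : ∀ l ∈ Dset, l ≤ sSup Dset := fun l hl => le_csSup hbdd hl
      set T : Set V := subt F ↑W r u with hT
      have hTW : T ⊆ ↑W := fun x hx => mem_subt_W hx
      have huT : u ∈ T := ⟨p₀, hp₀, hp₀W, p₀.end_mem_support⟩
      set A : Set V := T \ {u} with hA
      have hTA : T.ncard = A.ncard + 1 := (Set.ncard_diff_singleton_add_one huT).symm
      have hAcard : k ≤ A.ncard := by omega
      set W' : Finset V := W.filter (fun x => x ∉ T) with hW'
      have hW'W : W' ⊆ W := Finset.filter_subset _ _
      have hcard : W.card = W'.card + (A.ncard + 1) := by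
        have h1 : (W.filter (fun x => x ∈ T)).card + W'.card = W.card :=
          Finset.card_filter_add_card_filter_not _
        have h2 : W.filter (fun x => x ∈ T) = (Set.toFinite T).toFinset := by
          ext x
          simp only [Finset.mem_filter, Set.Finite.mem_toFinset]
          exact ⟨fun h => h.2, fun h => ⟨hTW h, h⟩⟩
        have h3 : (W.filter (fun x => x ∈ T)).card = T.ncard := by
          rw [h2, ← Set.ncard_eq_toFinset_card T (Set.toFinite T)]
        omega
      have hW'N : W'.card ≤ N := by
        have hAT : A.ncard + 1 ≥ 1 := by omega
        omega
      obtain ⟨S', hS'W', hS'comp, hS'count⟩ := ih W' hW'N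
      have hS'T : ∀ x ∈ S', x ∉ T := by
        intro x hx hxT
        have := hS'W' hx
        rw [hW'] at this
        simp only [Finset.coe_filter, Set.mem_setOf_eq] at this
        exact this.2 hxT
      have hS'W : S' ⊆ (W : Set V) := fun x hx => Finset.coe_subset.mpr hW'W (hS'W' hx)
      have hS'u : ∀ x ∈ S', x ≠ u := fun x hx hxu => hS'T x hx (hxu ▸ huT)
      set S : Set V := A ∪ S' with hS
      have hSW : S ⊆ ↑W := Set.union_subset (fun x hx => hTW hx.1) hS'W
      have hNE : ∀ a ∈ A, ∀ b ∈ S', ¬ F.Adj a b := by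
        intro a ha b hb hab
        have hbT : b ∈ T := subt_closed hF ha.1 (by simpa using ha.2) hab (hS'W hb)
        exact hS'T b hb hbT
      refine ⟨S, hSW, ?_, ?_⟩
      · intro v hv
        rcases hv with hvA | hvS'
        · obtain ⟨c, t, ht, htW, e, hct, hcW, hvc⟩ :=
            exists_child (W := (W : Set V)) hvA.1 (by simpa using hvA.2)
          have htlen : t.length = sSup Dset := by
            have := congrArg Subtype.val (hF.path_unique ⟨t, ht⟩ ⟨p₀, hp₀⟩)
            rw [show t = p₀ from this]
            exact hp₀len
          have hcsub : (subt F ↑W r c).ncard ≤ k := by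
            by_contra hc
            rw [not_le] at hc
            have hmem : (t.concat e).length ∈ Dset :=
              ⟨c, t.concat e, concat_isPath ht e hct,
                (by
                  intro x hx
                  rw [Walk.support_concat, List.mem_append,
                    List.mem_singleton] at hx
                  rcases hx with hx | rfl
                  · exact htW x hx
                  · exact hcW), hc, rfl⟩
            have := hmax _ hmem
            rw [Walk.length_concat, htlen] at this
            omega
          have hsub2 : compIn F S v ⊆ subt F ↑W r c := by
            rintro w ⟨p, hpS⟩
            have hstep1 : ∀ a b, a ∈ A → F.Adj a b → b ∈ S → b ∈ A := by
              intro a b ha hab hbS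
              rcases hbS with hbA | hbS'
              · exact hbA
              · exact absurd hab (hNE a ha b hbS')
            have hpA : ∀ x ∈ p.support, x ∈ A := walk_closed hstep1 p hpS hvA
            have hstep2 : ∀ a b, a ∈ subt F ↑W r c → F.Adj a b → b ∈ A →
                b ∈ subt F ↑W r c := by
              intro a b ha hab hb
              by_cases hac : a = c
              · subst hac
                exact subt_child_closed hF t ht htW e hct hcW hab (hTW hb.1)
                  (by simpa using hb.2)
              · exact subt_closed hF ha hac hab (hTW hb.1)
            exact walk_closed hstep2 p hpA hvc w p.end_mem_support
          exact le_trans (Set.ncard_le_ncard hsub2 (Set.toFinite _)) hcsub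
        · have hstep : ∀ a b, a ∈ S' → F.Adj a b → b ∈ S → b ∈ S' := by
            intro a b ha hab hbS
            rcases hbS with hbA | hbS'
            · exact absurd hab.symm (hNE b hbA a ha)
            · exact hbS'
          have hsub2 : compIn F S v ⊆ compIn F S' v := by
            rintro w ⟨p, hpS⟩
            exact ⟨p, fun x hx => walk_closed hstep p hpS hvS' x hx⟩
          exact le_trans (Set.ncard_le_ncard hsub2 (Set.toFinite _)) (hS'comp v hvS')
      · have hdisj : Disjoint A S' := by
          rw [Set.disjoint_left]
          exact fun a ha has => hS'T a has ha.1
        have hcardS : S.ncard = A.ncard + S'.ncard :=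
          Set.ncard_union_eq hdisj (Set.toFinite _) (Set.toFinite _)
        rw [hcard, hcardS]
        nlinarith [hS'count, hAcard]

lemma walk_of_induce {S : Set V} :
    ∀ {x y : ↥S} (_ : (F.induce S).Walk x y), ∃ p : F.Walk x.val y.val, wIn F S p := by
  intro x y q
  induction q with
  | nil =>
    refine ⟨Walk.nil, ?_⟩
    intro z hz
    simp only [Walk.support_nil, List.mem_singleton] at hz
    exact hz ▸ Subtype.coe_prop _
  | @cons a b c h q ih =>
    obtain ⟨p, hp⟩ := ih
    refine ⟨Walk.cons h p, ?_⟩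
    intro z hz
    change z ∈ (a : V) :: p.support at hz
    rw [List.mem_cons] at hz
    rcases hz with rfl | hz
    · exact a.2
    · exact hp z hz

lemma bridge [Finite V] {S : Set V} {k : ℕ} (h : ∀ v ∈ S, (compIn F S v).ncard ≤ k) :
    componentsAtMost (F.induce S) k := by
  intro v
  have himg : Subtype.val '' ((F.induce S).connectedComponentMk v).supp ⊆
      compIn F S v.val := by
    rintro x ⟨w, hw, rfl⟩
    rw [ConnectedComponent.mem_supp_iff] at hw
    have hr : (F.induce S).Reachable v w := (ConnectedComponent.eq.mp hw).symm
    obtain ⟨q⟩ := hr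
    exact walk_of_induce q
  calc ((F.induce S).connectedComponentMk v).supp.ncard
      = (Subtype.val '' ((F.induce S).connectedComponentMk v).supp).ncard :=
        (Set.ncard_image_of_injective _ Subtype.val_injective).symm
    _ ≤ (compIn F S v.val).ncard := Set.ncard_le_ncard himg (Set.toFinite _)
    _ ≤ k := h v.val v.2

end ForestDismantleAux

/-- If `F` is a finite forest on `n` vertices and `k ≥ 1`, then there is a
set `S` of vertices with `|S| ≥ n (1 - 1/(k+1))` such that every connected component of the
induced subgraph `F[S]` has at most `k` vertices. -/
theorem forest_dismantle {V : Type*} [Fintype V] (F : SimpleGraph V) (hF : F.IsAcyclic)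
    (k : ℕ) (hk : 1 ≤ k) (n : ℕ) (hn : n = Fintype.card V) :
    ∃ S : Set V, componentsAtMost (F.induce S) k ∧
      (n : ℝ) * (1 - 1 / (k + 1)) ≤ S.ncard := by
  classical
  obtain ⟨S, hSW, hcomp, hcount⟩ :=
    ForestDismantleAux.main_aux hF k (Fintype.card V) Finset.univ (by simp)
  refine ⟨S, ForestDismantleAux.bridge hcomp, ?_⟩
  rw [Finset.card_univ] at hcount
  have h2 : (k : ℝ) * n ≤ ((k : ℝ) + 1) * S.ncard := by
    rw [hn]
    exact_mod_cast hcount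
  have h1 : (0 : ℝ) < (k : ℝ) + 1 := by positivity
  rw [show (1 : ℝ) - 1 / ((k : ℝ) + 1) = (k : ℝ) / ((k : ℝ) + 1) by field_simp; ring]
  rw [mul_div_assoc', div_le_iff₀ h1]
  nlinarith [h2]
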